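/- Fix integers n ≥ 2 and 1 ≤ a ≤ n−1 with gcd(a,n) = 1; let a' be the unique integer with 1 ≤ a' ≤ n−1 and a·a' ≡ 1 (mod n), and let (b₁,…,b_l) be the unique list of integers bᵢ ≥ 2 with Hirzebruch–Jung continued fraction value [b₁,…,b_l] = n/a. Then the correction term k(1/n(1,a)) := −2 + (2 + a + a')/n + Σᵢ₌₁^l (bᵢ − 2) is a nonnegative rational number. -/

import Mathlib

/-- The Hirzebruch–Jung continued fraction value of a list of integers:
`hjcf [b₁, …, b_l] = b₁ − 1/(b₂ − 1/(⋯ − 1/b_l))`. -/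
def hjcf : List ℤ → ℚ
  | [] => 0
  | b :: l => (b : ℚ) - 1 / hjcf l


lemma hjcf_gt_one : ∀ b : List ℤ, b ≠ [] → (∀ x ∈ b, 2 ≤ x) → 1 < hjcf b
  | [], h, _ => absurd rfl h
  | [x], _, h2 => by
      have : (2:ℚ) ≤ x := by exact_mod_cast h2 x (by simp)
      simp only [hjcf]
      norm_num
      linarith
  | x :: y :: t, _, h2 => by
      have ih : 1 < hjcf (y :: t) :=
        hjcf_gt_one (y :: t) (by simp) (fun z hz => h2 z (List.mem_cons_of_mem _ hz))
      have hx : (2:ℚ) ≤ x := by exact_mod_cast h2 x (by simp)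
      have h0 : 0 < hjcf (y :: t) := by linarith
      have h1 : 1 / hjcf (y :: t) < 1 := by rw [div_lt_one h0]; linarith
      show (x:ℚ) - 1 / hjcf (y :: t) > 1
      linarith

lemma map_sum_cons (x : ℤ) (t : List ℤ) :
    ((x :: t).map (fun y => (y : ℚ) - 2)).sum
      = ((x:ℚ) - 2) + (t.map (fun y => (y : ℚ) - 2)).sum := by
  simp

lemma map_sum_nil : (([] : List ℤ).map (fun y => (y : ℚ) - 2)).sum = 0 := by simp

lemma aux : ∀ (b : List ℤ) (n a a' : ℤ), b ≠ [] → (∀ x ∈ b, 2 ≤ x) →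
    2 ≤ n → 1 ≤ a → a ≤ n - 1 → IsCoprime a n → 1 ≤ a' → a' ≤ n - 1 →
    (n ∣ a * a' - 1) → hjcf b = (n:ℚ)/(a:ℚ) →
    0 ≤ -2 + (2 + (a:ℚ) + (a':ℚ))/(n:ℚ) + (b.map (fun x => (x : ℚ) - 2)).sum := by
  intro b
  induction b with
  | nil => intro n a a' hne; exact absurd rfl hne
  | cons x t ih =>
    intro n a a' _ h2 hn ha han hco ha' ha'n hdvd hval
    have hx2 : (2:ℤ) ≤ x := h2 x (by simp)
    have hnq : (0:ℚ) < (n:ℚ) := by exact_mod_cast (by linarith : (0:ℤ) < n)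
    have haq : (0:ℚ) < (a:ℚ) := by exact_mod_cast (by linarith : (0:ℤ) < a)
    rcases eq_or_ne t [] with rfl | htne
    · -- base case: single element
      have hx : hjcf [x] = (x:ℚ) := by simp [hjcf]
      rw [hx] at hval
      -- a divides n
      have ha0 : (a:ℚ) ≠ 0 := ne_of_gt haq
      have hxa : (x:ℚ) * a = n := by
        rw [hval]; field_simp
      have hxaZ : x * a = n := by exact_mod_cast hxa
      have hdvdn : a ∣ n := Dvd.intro_left x hxaZ
      have hua : IsUnit a := hco.isUnit_of_dvd' dvd_rfl hdvdn
      have ha1 : a = 1 := by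
        rcases Int.isUnit_iff.mp hua with h | h <;> omega
      subst ha1
      have ha'1 : a' = 1 := by
        rcases hdvd with ⟨k, hk⟩
        rcases eq_or_ne k 0 with rfl | hk0
        · omega
        · rcases lt_or_gt_of_ne hk0 with hlt | hgt <;> nlinarith
      subst ha'1
      have hxn : (x:ℚ) = n := by rw [hval]; push_cast; field_simp
      have : -2 + (2 + (1:ℚ) + 1)/(n:ℚ) + (((x:ℚ) - 2) + 0) = ((n:ℚ)-2)^2/(n:ℚ) := by
        rw [hxn]; field_simp; ring
      rw [map_sum_cons, map_sum_nil]
      push_cast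
      rw [show (-2 + (2 + (1:ℚ) + 1)/(n:ℚ) + (((x:ℚ) - 2) + 0)) = ((n:ℚ)-2)^2/(n:ℚ) from this]
      positivity
    · -- inductive step
      have ht1 : 1 < hjcf t := hjcf_gt_one t htne (fun z hz => h2 z (List.mem_cons_of_mem _ hz))
      have ht0 : (0:ℚ) < hjcf t := by linarith
      have hval' : (x:ℚ) - 1 / hjcf t = (n:ℚ)/(a:ℚ) := by
        simpa [hjcf] using hval
      set m : ℤ := x * a - n with hm
      have hmq : (m:ℚ) = (x:ℚ)*a - n := by push_cast [hm]; ring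
      have ha0 : (a:ℚ) ≠ 0 := ne_of_gt haq
      have hinvval : 1 / hjcf t = (m:ℚ)/(a:ℚ) := by
        rw [hmq]
        have e : ((x:ℚ) * a - n)/(a:ℚ) = (x:ℚ) - (n:ℚ)/(a:ℚ) := by field_simp
        rw [e]
        linarith [hval']
      have h01 : 0 < 1 / hjcf t := by positivity
      have h11 : 1 / hjcf t < 1 := by rw [div_lt_one ht0]; linarith
      have hm0 : (0:ℚ) < (m:ℚ) := by
        by_contra h
        push_neg at h
        have : (m:ℚ)/(a:ℚ) ≤ 0 := div_nonpos_of_nonpos_of_nonneg h (le_of_lt haq)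
        linarith [hinvval ▸ h01]
      have hma : (m:ℚ) < (a:ℚ) := by
        have : (m:ℚ)/(a:ℚ) < 1 := by rw [← hinvval]; exact h11
        rwa [div_lt_one haq] at this
      have hm1 : 1 ≤ m := by exact_mod_cast hm0
      have hma' : m ≤ a - 1 := by
        have hlt : m < a := by exact_mod_cast hma
        exact Int.le_sub_one_iff.mpr hlt
      have ha2 : 2 ≤ a := by omega
      -- c
      rcases hdvd with ⟨c, hc⟩
      have hc1 : 1 ≤ c := by nlinarith
      have hca : c ≤ a - 1 := by nlinarith
      -- coprime m a
      have hcom : IsCoprime m a := by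
        have h1 : IsCoprime (-n + a * x) a := (hco.symm.neg_left).add_mul_left_left x
        have : m = -n + a * x := by rw [hm]; ring
        rwa [this]
      -- divisibility
      have hdvd' : a ∣ m * c - 1 := ⟨x * c - a', by rw [hm]; linear_combination hc⟩
      -- hjcf t value
      have htval : hjcf t = (a:ℚ)/(m:ℚ) := by
        have hmne : (m:ℚ) ≠ 0 := ne_of_gt hm0
        have htne0 : hjcf t ≠ 0 := ne_of_gt ht0
        field_simp at hinvval ⊢
        linarith [hinvval]
      have IH := ih a m c htne (fun z hz => h2 z (List.mem_cons_of_mem _ hz))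
        ha2 hm1 hma' hcom hc1 hca hdvd' htval
      have hcq : (a:ℚ) * (a':ℚ) - 1 = (n:ℚ) * (c:ℚ) := by exact_mod_cast hc
      rw [map_sum_cons]
      have key : -2 + (2 + (a:ℚ) + (a':ℚ))/(n:ℚ) + (((x:ℚ) - 2) + (t.map (fun x => (x : ℚ) - 2)).sum)
          = (-2 + (2 + (m:ℚ) + (c:ℚ))/(a:ℚ) + (t.map (fun x => (x : ℚ) - 2)).sum)
            + ((n:ℚ) - (a:ℚ) - 1)^2 / ((n:ℚ) * (a:ℚ)) := by
        rw [hmq]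
        field_simp
        ring_nf
        linear_combination hcq
      rw [key]
      have hsq : (0:ℚ) ≤ ((n:ℚ) - (a:ℚ) - 1)^2 / ((n:ℚ) * (a:ℚ)) := by positivity
      linarith

/-- For a cyclic quotient singularity of type `1/n (1,a)` (so `n ≥ 2`,
`1 ≤ a ≤ n−1`, `gcd(a,n) = 1`), with `a'` the inverse of `a` mod `n`
(`1 ≤ a' ≤ n−1`, `a·a' ≡ 1 (mod n)`) and `(b₁,…,b_l)` the list of integers
`bᵢ ≥ 2` with `[b₁,…,b_l] = n/a`, the correction term
`k(1/n(1,a)) = −2 + (2+a+a')/n + Σᵢ (bᵢ − 2)` is nonnegative. -/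
theorem k_correction_nonneg (n a a' : ℤ) (hn : 2 ≤ n) (ha : 1 ≤ a) (han : a ≤ n - 1)
    (hgcd : Int.gcd a n = 1) (ha' : 1 ≤ a') (ha'n : a' ≤ n - 1)
    (hinv : a * a' ≡ 1 [ZMOD n])
    (b : List ℤ) (hne : b ≠ []) (h2 : ∀ x ∈ b, 2 ≤ x)
    (hval : hjcf b = (n : ℚ) / (a : ℚ)) :
    0 ≤ -2 + (2 + (a : ℚ) + (a' : ℚ)) / (n : ℚ) + (b.map (fun x => (x : ℚ) - 2)).sum := by
  have hco : IsCoprime a n := Int.isCoprime_iff_gcd_eq_one.mpr hgcd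
  have hdvd : n ∣ a * a' - 1 := Int.ModEq.dvd hinv.symm
  exact aux b n a a' hne h2 hn ha han hco ha' ha'n hdvd hval
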